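/- Let G : ℝ → ℝ be continuous and let x_d ≤ x_u, y_d ≤ y_u with δx = x_u − x_d, δy = y_u − y_d, and assume δx ≤ δy. Then ∫_{x_d}^{x_u} ∫_{y_d}^{y_u} G(x+y) dy dx = ∫_0^{δx} u·G(u + x_d + y_d) du + ∫_{δx}^{δy} δx·G(u + x_d + y_d) du + ∫_{δy}^{δx+δy} (δx + δy − u)·G(u + x_d + y_d) du. -/

import Mathlib

/-- Reduction of the double integral of `G(x+y)` over a rectangle to three single integrals
(equation (13) of the paper, with corrected integration limits). -/
theorem double_integral_to_single (G : ℝ → ℝ) (hG : Continuous G)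
    (xd xu yd yu : ℝ) (hx : xd ≤ xu) (hy : yd ≤ yu)
    (h : xu - xd ≤ yu - yd) :
    (∫ x in xd..xu, ∫ y in yd..yu, G (x + y))
      = (∫ u in (0:ℝ)..(xu - xd), u * G (u + xd + yd))
        + (∫ u in (xu - xd)..(yu - yd), (xu - xd) * G (u + xd + yd))
        + (∫ u in (yu - yd)..(xu - xd + (yu - yd)),
            (xu - xd + (yu - yd) - u) * G (u + xd + yd)) := by
  set F : ℝ → ℝ := fun t => ∫ s in (0:ℝ)..t, G s with hFdef
  have hF : ∀ t, HasDerivAt F (G t) t := fun t =>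
    (hG.integral_hasStrictDerivAt 0 t).hasDerivAt
  have hFc : Continuous F := by
    rw [continuous_iff_continuousAt]; exact fun t => (hF t).continuousAt
  set H : ℝ → ℝ := fun t => ∫ s in (0:ℝ)..t, F s with hHdef
  have hH : ∀ t, HasDerivAt H (F t) t := fun t =>
    (hFc.integral_hasStrictDerivAt 0 t).hasDerivAt
  have keyG : ∀ p q : ℝ, (∫ t in p..q, G t) = F q - F p := fun p q =>
    intervalIntegral.integral_eq_sub_of_hasDerivAt (fun t _ => hF t)
      (hG.intervalIntegrable p q)
  have keyF : ∀ p q : ℝ, (∫ t in p..q, F t) = H q - H p := fun p q =>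
    intervalIntegral.integral_eq_sub_of_hasDerivAt (fun t _ => hH t)
      (hFc.intervalIntegrable p q)
  have hinner : ∀ x : ℝ, (∫ y in yd..yu, G (x + y)) = F (x + yu) - F (x + yd) := by
    intro x
    rw [intervalIntegral.integral_comp_add_left G x]
    exact keyG _ _
  have hFca : ∀ c : ℝ, Continuous fun x : ℝ => F (x + c) := fun c =>
    hFc.comp (continuous_id.add continuous_const)
  have hLHS : (∫ x in xd..xu, ∫ y in yd..yu, G (x + y))
      = (H (xu + yu) - H (xd + yu)) - (H (xu + yd) - H (xd + yd)) := by
    rw [intervalIntegral.integral_congr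
      (g := fun x => F (x + yu) - F (x + yd)) (fun x _ => hinner x)]
    rw [intervalIntegral.integral_sub ((hFca yu).intervalIntegrable _ _)
      ((hFca yd).intervalIntegrable _ _),
      intervalIntegral.integral_comp_add_right F yu,
      intervalIntegral.integral_comp_add_right F yd, keyF, keyF]
  have hFa : ∀ u c : ℝ, HasDerivAt (fun u : ℝ => F (u + c)) (G (u + c)) u :=
    fun u c => HasDerivAt.comp_add_const u c (hF (u + c))
  have hHa : ∀ u c : ℝ, HasDerivAt (fun u : ℝ => H (u + c)) (F (u + c)) u :=
    fun u c => HasDerivAt.comp_add_const u c (hH (u + c))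
  set a := xd + yd with ha
  have h1 : (∫ u in (0:ℝ)..(xu - xd), u * G (u + xd + yd))
      = (xu - xd) * F (xu + yd) - (H (xu + yd) - H (xd + yd)) := by
    have hd : ∀ u ∈ Set.uIcc (0:ℝ) (xu - xd),
        HasDerivAt (fun u => u * F (u + a) - H (u + a)) (u * G (u + xd + yd)) u := by
      intro u _
      have := ((hasDerivAt_id u).mul (hFa u a)).sub (hHa u a)
      refine this.congr_deriv ?_
      simp only [id_eq]; rw [ha]; ring_nf
    rw [intervalIntegral.integral_eq_sub_of_hasDerivAt hd
      (by apply Continuous.intervalIntegrable; fun_prop)]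
    have e1 : xu - xd + a = xu + yd := by rw [ha]; ring
    have e2 : (0:ℝ) + a = xd + yd := by rw [ha]; ring
    rw [e1, e2, ← ha]
    ring
  have h2 : (∫ u in (xu - xd)..(yu - yd), (xu - xd) * G (u + xd + yd))
      = (xu - xd) * (F (xd + yu) - F (xu + yd)) := by
    rw [intervalIntegral.integral_const_mul]
    congr 1
    simp only [add_assoc, ← ha]
    rw [intervalIntegral.integral_comp_add_right G a, keyG]
    have e1 : yu - yd + a = xd + yu := by rw [ha]; ring
    have e2 : xu - xd + a = xu + yd := by rw [ha]; ring
    rw [e1, e2]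
  have h3 : (∫ u in (yu - yd)..(xu - xd + (yu - yd)),
        (xu - xd + (yu - yd) - u) * G (u + xd + yd))
      = H (xu + yu) - ((xu - xd) * F (xd + yu) + H (xd + yu)) := by
    have hd : ∀ u ∈ Set.uIcc (yu - yd) (xu - xd + (yu - yd)),
        HasDerivAt (fun u => (xu - xd + (yu - yd) - u) * F (u + a) + H (u + a))
          ((xu - xd + (yu - yd) - u) * G (u + xd + yd)) u := by
      intro u _
      have := (((hasDerivAt_const u (xu - xd + (yu - yd))).sub
        (hasDerivAt_id u)).mul (hFa u a)).add (hHa u a)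
      refine this.congr_deriv ?_
      simp only [Pi.sub_apply, id_eq]; rw [ha]; ring_nf
    rw [intervalIntegral.integral_eq_sub_of_hasDerivAt hd
      (by apply Continuous.intervalIntegrable; fun_prop)]
    have e1 : xu - xd + (yu - yd) + a = xu + yu := by rw [ha]; ring
    have e2 : yu - yd + a = xd + yu := by rw [ha]; ring
    rw [e1, e2]
    ring
  rw [hLHS, h1, h2, h3]
  ring
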